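/- Suppose Λ₁ and Λ₂ are complementary, primitive sublattices of an integral, positive definite, unimodular lattice Λ, with restriction maps r_i : Λ → Λ_i*. Then for i = 1, 2 the map r_i carries Short(Λ) into Short(Λ_i); moreover, the induced map Short(Λ) → Short(Λ₁) is surjective if and only if the induced map Short(Λ) → Short(Λ₂) is surjective. -/

import Mathlib

set_option linter.unusedSectionVars false

open Matrix BigOperators

namespace Greene

/-- A rational number is an integer. -/
def isInt (q : ℚ) : Prop := ∃ m : ℤ, q = (m : ℚ)

section LatticeDefs

variable {ι : Type} [Fintype ι] [DecidableEq ι]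
variable {ι' : Type} [Fintype ι'] [DecidableEq ι']

/-- The bilinear form on `ι → ℚ` with (integral) Gram matrix `B`. -/
def qform (B : Matrix ι ι ℤ) (x y : ι → ℚ) : ℚ :=
  x ⬝ᵥ ((B.map (Int.cast : ℤ → ℚ)) *ᵥ y)

/-- The set of integer vectors: the standard lattice inside `ι → ℚ`. -/
def intVecs (ι : Type) [Fintype ι] [DecidableEq ι] : Set (ι → ℚ) :=
  {x | ∀ i, isInt (x i)}

lemma qform_zero_left (B : Matrix ι ι ℤ) (y : ι → ℚ) : qform B 0 y = 0 :=
  zero_dotProduct _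

lemma qform_add_left (B : Matrix ι ι ℤ) (x x' y : ι → ℚ) :
    qform B (x + x') y = qform B x y + qform B x' y := add_dotProduct _ _ _

lemma qform_neg_left (B : Matrix ι ι ℤ) (x y : ι → ℚ) :
    qform B (-x) y = -qform B x y := neg_dotProduct _ _

/-- The dual lattice `S* = {x ∈ span_ℚ S | ⟨x,y⟩ ∈ ℤ for all y ∈ S}`. -/
def dualOf (B : Matrix ι ι ℤ) (S : Set (ι → ℚ)) : AddSubgroup (ι → ℚ) where
  carrier := {x | x ∈ Submodule.span ℚ S ∧ ∀ y ∈ S, isInt (qform B x y)}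
  zero_mem' := ⟨Submodule.zero_mem _, fun y _ => ⟨0, by simp [qform_zero_left]⟩⟩
  add_mem' := by
    intro a b ha hb
    refine ⟨Submodule.add_mem _ ha.1 hb.1, fun y hy => ?_⟩
    obtain ⟨m, hm⟩ := ha.2 y hy
    obtain ⟨m', hm'⟩ := hb.2 y hy
    exact ⟨m + m', by rw [qform_add_left, hm, hm']; push_cast; ring⟩
  neg_mem' := by
    intro a ha
    refine ⟨Submodule.neg_mem _ ha.1, fun y hy => ?_⟩
    obtain ⟨m, hm⟩ := ha.2 y hy
    exact ⟨-m, by rw [qform_neg_left, hm]; push_cast; ring⟩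

/-- Characteristic covectors: `χ ∈ S*` with `⟨χ,y⟩ ≡ ⟨y,y⟩ (mod 2)` for all `y ∈ S`. -/
def CharOf (B : Matrix ι ι ℤ) (S : Set (ι → ℚ)) : Set (ι → ℚ) :=
  {χ | χ ∈ dualOf B S ∧ ∀ y ∈ S, ∃ m : ℤ, qform B χ y - qform B y y = 2 * (m : ℚ)}

/-- Two covectors are in the same class mod `2S`. -/
def SameClass (S : Set (ι → ℚ)) (χ χ' : ι → ℚ) : Prop :=
  ∃ y ∈ S, χ' = χ + (2 : ℚ) • y

/-- Short characteristic covectors: minimal norm in their class mod `2S`. -/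
def ShortOf (B : Matrix ι ι ℤ) (S : Set (ι → ℚ)) : Set (ι → ℚ) :=
  {χ | χ ∈ CharOf B S ∧ ∀ χ' ∈ CharOf B S, SameClass S χ χ' → qform B χ χ ≤ qform B χ' χ'}

/-- Rank of a lattice: dimension of its rational span. -/
noncomputable def rkOf (S : Set (ι → ℚ)) : ℕ := Module.finrank ℚ (Submodule.span ℚ S)

/-- The lattice `S` sitting inside its dual. -/
def latIn (B : Matrix ι ι ℤ) (S : Set (ι → ℚ)) : AddSubgroup (dualOf B S) :=
  AddSubgroup.closure {x | (x : ι → ℚ) ∈ S}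

/-- The discriminant group `S*/S`. -/
def disc (B : Matrix ι ι ℤ) (S : Set (ι → ℚ)) : Type :=
  dualOf B S ⧸ latIn B S

noncomputable instance (B : Matrix ι ι ℤ) (S : Set (ι → ℚ)) : AddCommGroup (disc B S) :=
  inferInstanceAs (AddCommGroup (dualOf B S ⧸ latIn B S))

/-- The class of a dual vector in the discriminant group. -/
def dmk (B : Matrix ι ι ℤ) (S : Set (ι → ℚ)) {x : ι → ℚ} (hx : x ∈ dualOf B S) :
    disc B S := QuotientAddGroup.mk (⟨x, hx⟩ : dualOf B S)

/-- `S` is an additive subgroup (a sublattice, when contained in a lattice). -/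
def IsLat (S : Set (ι → ℚ)) : Prop :=
  (0 : ι → ℚ) ∈ S ∧ ∀ x ∈ S, ∀ y ∈ S, x - y ∈ S

/-- The form is integer valued on `S`. -/
def IntegralOn (B : Matrix ι ι ℤ) (S : Set (ι → ℚ)) : Prop :=
  ∀ x ∈ S, ∀ y ∈ S, isInt (qform B x y)

/-- Unimodularity: the dual lattice equals the lattice. -/
def UnimodularOn (B : Matrix ι ι ℤ) (S : Set (ι → ℚ)) : Prop :=
  ((dualOf B S : AddSubgroup (ι → ℚ)) : Set (ι → ℚ)) = S

/-- Positive definiteness of the form on the span of `S`. -/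
def PosDefOn (B : Matrix ι ι ℤ) (S : Set (ι → ℚ)) : Prop :=
  ∀ x ∈ Submodule.span ℚ S, x ≠ 0 → 0 < qform B x x

/-- Orthogonality of two sublattices. -/
def OrthogonalSets (B : Matrix ι ι ℤ) (S T : Set (ι → ℚ)) : Prop :=
  ∀ x ∈ S, ∀ y ∈ T, qform B x y = 0

/-- `S, T` are complementary sublattices of `L`: orthogonal with ranks summing to `rk L`. -/
noncomputable def ComplementaryIn (B : Matrix ι ι ℤ) (L S T : Set (ι → ℚ)) : Prop :=
  OrthogonalSets B S T ∧ rkOf S + rkOf T = rkOf L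

/-- `S ⊆ L` is a primitive sublattice: the restriction map `L* → S*` surjects. -/
def PrimitiveIn (B : Matrix ι ι ℤ) (L S : Set (ι → ℚ)) : Prop :=
  ∀ x ∈ dualOf B S, ∃ z ∈ dualOf B L, ∀ u ∈ S, qform B z u = qform B x u

/-- `s` is the signature of the form restricted to the span of `S` (Sylvester form). -/
def IsSignatureOf (B : Matrix ι ι ℤ) (S : Set (ι → ℚ)) (s : ℤ) : Prop :=
  ∃ (p q : ℕ) (v : Fin (p + q) → (ι → ℚ)),
    (∀ i, v i ∈ Submodule.span ℚ S) ∧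
    Submodule.span ℚ (Set.range v) = Submodule.span ℚ S ∧
    LinearIndependent ℚ v ∧
    (∀ i j, i ≠ j → qform B (v i) (v j) = 0) ∧
    (∀ i : Fin (p + q),
      if (i : ℕ) < p then 0 < qform B (v i) (v i) else qform B (v i) (v i) < 0) ∧
    s = (p : ℤ) - (q : ℤ)

/-- `S` admits an orthonormal basis of `n` elements, i.e. `S ≅ ℤⁿ`. -/
def HasOrthonormalBasis (B : Matrix ι ι ℤ) (S : Set (ι → ℚ)) (n : ℕ) : Prop :=
  ∃ v : Fin n → (ι → ℚ), (∀ i, v i ∈ S) ∧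
    (∀ i j, qform B (v i) (v j) = if i = j then 1 else 0) ∧
    (∀ x ∈ S, ∃ c : Fin n → ℤ, x = ∑ i, (c i : ℚ) • v i)

/-- Isomorphism of lattices: an additive bijection preserving the forms. -/
def LatIso (B : Matrix ι ι ℤ) (S : Set (ι → ℚ)) (B' : Matrix ι' ι' ℤ) (S' : Set (ι' → ℚ)) :
    Prop :=
  ∃ f : (ι → ℚ) → (ι' → ℚ), Set.BijOn f S S' ∧
    (∀ x ∈ S, ∀ y ∈ S, f (x + y) = f x + f y) ∧
    (∀ x ∈ S, ∀ y ∈ S, qform B' (f x) (f y) = qform B x y)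

/-- An isomorphism of the torsors `C(S₁) → C(S₂)` (given on representatives by `Φ`),
covering the group isomorphism `ψ` of discriminant groups. -/
def TorsorMapIso (B₁ : Matrix ι ι ℤ) (S₁ : Set (ι → ℚ))
    (B₂ : Matrix ι' ι' ℤ) (S₂ : Set (ι' → ℚ))
    (Φ : (ι → ℚ) → (ι' → ℚ)) (ψ : disc B₁ S₁ ≃+ disc B₂ S₂) : Prop :=
  (∀ χ ∈ CharOf B₁ S₁, Φ χ ∈ CharOf B₂ S₂) ∧
  (∀ χ ∈ CharOf B₁ S₁, ∀ χ' ∈ CharOf B₁ S₁,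
    (SameClass S₁ χ χ' ↔ SameClass S₂ (Φ χ) (Φ χ'))) ∧
  (∀ μ ∈ CharOf B₂ S₂, ∃ χ ∈ CharOf B₁ S₁, SameClass S₂ (Φ χ) μ) ∧
  (∀ χ ∈ CharOf B₁ S₁, ∀ χ' ∈ CharOf B₁ S₁,
    ∀ (x : ι → ℚ) (y : ι' → ℚ) (hx : x ∈ dualOf B₁ S₁) (hy : y ∈ dualOf B₂ S₂),
      χ' = χ + (2 : ℚ) • x → Φ χ' = Φ χ + (2 : ℚ) • y →
      ψ (dmk B₁ S₁ hx) = dmk B₂ S₂ hy)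

/-- Compatibility of `Φ` with the `d`-invariants: `d₂([Φ χ]) = ε · d₁([χ])`,
where `d` is the minimum of `(|χ'|² - rk)/4` over the class. -/
noncomputable def DCompat (B₁ : Matrix ι ι ℤ) (S₁ : Set (ι → ℚ))
    (B₂ : Matrix ι' ι' ℤ) (S₂ : Set (ι' → ℚ))
    (ε : ℚ) (Φ : (ι → ℚ) → (ι' → ℚ)) : Prop :=
  ∀ χ ∈ CharOf B₁ S₁, ∀ q : ℚ,
    IsLeast {t | ∃ χ' ∈ CharOf B₁ S₁, SameClass S₁ χ χ' ∧
      t = (qform B₁ χ' χ' - (rkOf S₁ : ℚ)) / 4} q →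
    IsLeast {t | ∃ μ ∈ CharOf B₂ S₂, SameClass S₂ (Φ χ) μ ∧
      t = (qform B₂ μ μ - (rkOf S₂ : ℚ)) / 4} (ε * q)

/-- Compatibility of `Φ` with the `ρ`-invariants: `ρ₂([Φ χ]) ≡ ε · ρ₁([χ]) (mod 2)`. -/
def RhoCompat (B₁ : Matrix ι ι ℤ) (S₁ : Set (ι → ℚ))
    (B₂ : Matrix ι' ι' ℤ) (S₂ : Set (ι' → ℚ))
    (ε : ℚ) (Φ : (ι → ℚ) → (ι' → ℚ)) : Prop :=
  ∀ χ ∈ CharOf B₁ S₁, ∀ s₁ s₂ : ℤ, IsSignatureOf B₁ S₁ s₁ → IsSignatureOf B₂ S₂ s₂ →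
    ∃ m : ℤ, (qform B₂ (Φ χ) (Φ χ) - (s₂ : ℚ)) / 4 - ε * ((qform B₁ χ χ - (s₁ : ℚ)) / 4)
      = 2 * (m : ℚ)

/-- The `d`-invariants `(C(S₁), d₁)` and `(C(S₂), ε·d₂)` are isomorphic. -/
noncomputable def DIso (B₁ : Matrix ι ι ℤ) (S₁ : Set (ι → ℚ))
    (B₂ : Matrix ι' ι' ℤ) (S₂ : Set (ι' → ℚ)) (ε : ℚ) : Prop :=
  ∃ (Φ : (ι → ℚ) → (ι' → ℚ)) (ψ : disc B₁ S₁ ≃+ disc B₂ S₂),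
    TorsorMapIso B₁ S₁ B₂ S₂ Φ ψ ∧ DCompat B₁ S₁ B₂ S₂ ε Φ


-- ===== auxiliary lemmas =====

lemma isInt_intCast (m : ℤ) : isInt (m : ℚ) := ⟨m, rfl⟩
lemma isInt_add {a b : ℚ} (ha : isInt a) (hb : isInt b) : isInt (a + b) := by
  obtain ⟨m, rfl⟩ := ha; obtain ⟨k, rfl⟩ := hb; exact ⟨m + k, by push_cast; ring⟩
lemma isInt_mul {a b : ℚ} (ha : isInt a) (hb : isInt b) : isInt (a * b) := by
  obtain ⟨m, rfl⟩ := ha; obtain ⟨k, rfl⟩ := hb; exact ⟨m * k, by push_cast; ring⟩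
lemma isInt_neg {a : ℚ} (ha : isInt a) : isInt (-a) := by
  obtain ⟨m, rfl⟩ := ha; exact ⟨-m, by push_cast; ring⟩
lemma isInt_sub {a b : ℚ} (ha : isInt a) (hb : isInt b) : isInt (a - b) := by
  rw [sub_eq_add_neg]; exact isInt_add ha (isInt_neg hb)
lemma isInt_sum {s : Finset ι} {f : ι → ℚ} (h : ∀ i ∈ s, isInt (f i)) :
    isInt (∑ i ∈ s, f i) := by
  classical
  induction s using Finset.induction with
  | empty => exact ⟨0, by simp⟩
  | insert _ _ hx ih =>
    rw [Finset.sum_insert hx]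
    exact isInt_add (h _ (Finset.mem_insert_self _ _))
      (ih fun i hi => h i (Finset.mem_insert_of_mem hi))




lemma qform_eq (B : Matrix ι ι ℤ) (x y : ι → ℚ) :
    qform B x y = ∑ i, ∑ j, x i * (B i j : ℚ) * y j := by
  unfold qform
  simp [dotProduct, Matrix.mulVec, Finset.mul_sum, mul_assoc]

lemma qform_comm {B : Matrix ι ι ℤ} (hB : B.IsSymm) (x y : ι → ℚ) :
    qform B x y = qform B y x := by
  rw [qform_eq, qform_eq, Finset.sum_comm]
  refine Finset.sum_congr rfl fun j _ => Finset.sum_congr rfl fun i _ => ?_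
  rw [← hB.apply i j]; ring

lemma qform_add_right (B : Matrix ι ι ℤ) (x y y' : ι → ℚ) :
    qform B x (y + y') = qform B x y + qform B x y' := by
  simp only [qform_eq, ← Finset.sum_add_distrib]
  exact Finset.sum_congr rfl fun i _ => Finset.sum_congr rfl fun j _ => by
    simp [Pi.add_apply]; ring

lemma qform_smul_right (B : Matrix ι ι ℤ) (c : ℚ) (x y : ι → ℚ) :
    qform B x (c • y) = c * qform B x y := by
  simp only [qform_eq, Finset.mul_sum]
  exact Finset.sum_congr rfl fun i _ => Finset.sum_congr rfl fun j _ => by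
    simp [Pi.smul_apply, smul_eq_mul]; ring

lemma qform_smul_left (B : Matrix ι ι ℤ) (c : ℚ) (x y : ι → ℚ) :
    qform B (c • x) y = c * qform B x y := by
  simp only [qform_eq, Finset.mul_sum]
  exact Finset.sum_congr rfl fun i _ => Finset.sum_congr rfl fun j _ => by
    simp [Pi.smul_apply, smul_eq_mul]; ring

lemma qform_zero_right (B : Matrix ι ι ℤ) (x : ι → ℚ) : qform B x 0 = 0 := by
  simp [qform_eq]

lemma qform_sub_left (B : Matrix ι ι ℤ) (x x' y : ι → ℚ) :
    qform B (x - x') y = qform B x y - qform B x' y := by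
  simp only [qform_eq, ← Finset.sum_sub_distrib]
  exact Finset.sum_congr rfl fun i _ => Finset.sum_congr rfl fun j _ => by
    simp [Pi.sub_apply]; ring

lemma qform_sub_right (B : Matrix ι ι ℤ) (x y y' : ι → ℚ) :
    qform B x (y - y') = qform B x y - qform B x y' := by
  simp only [qform_eq, ← Finset.sum_sub_distrib]
  exact Finset.sum_congr rfl fun i _ => Finset.sum_congr rfl fun j _ => by
    simp [Pi.sub_apply]; ring

/-- integrality of the form on integer vectors -/
lemma qform_int (B : Matrix ι ι ℤ) {x y : ι → ℚ} (hx : x ∈ intVecs ι) (hy : y ∈ intVecs ι) :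
    isInt (qform B x y) := by
  rw [qform_eq]
  exact isInt_sum fun i _ => isInt_sum fun j _ =>
    isInt_mul (isInt_mul (hx i) (isInt_intCast _)) (hy j)

/-- agreement on a set extends to its span (in the right slot) -/
lemma qform_eqOn_span {B : Matrix ι ι ℤ} {a b : ι → ℚ} {S : Set (ι → ℚ)}
    (h : ∀ u ∈ S, qform B a u = qform B b u) :
    ∀ u ∈ Submodule.span ℚ S, qform B a u = qform B b u := by
  intro u hu
  induction hu using Submodule.span_induction with
  | mem x hx => exact h x hx
  | zero => simp [qform_zero_right]
  | add x y _ _ hx hy => rw [qform_add_right, qform_add_right, hx, hy]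
  | smul c x _ hx => rw [qform_smul_right, qform_smul_right, hx]



lemma span_intVecs_top : Submodule.span ℚ (intVecs ι) = ⊤ := by
  have h : Set.range (fun i => (Pi.basisFun ℚ ι) i) ⊆ intVecs ι := by
    rintro x ⟨i, rfl⟩
    intro j
    simp only [Pi.basisFun_apply]
    by_cases h : i = j
    · subst h; exact ⟨1, by simp⟩
    · exact ⟨0, by simp [Pi.single_apply, h]⟩
  have := Submodule.span_mono (R := ℚ) h
  rw [Module.Basis.span_eq] at this
  exact top_le_iff.mp this

lemma qform_nonneg {B : Matrix ι ι ℤ} (hpos : PosDefOn B (intVecs ι)) (x : ι → ℚ) :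
    0 ≤ qform B x x := by
  by_cases hx : x = 0
  · subst hx; simp [qform_eq]
  · exact le_of_lt (hpos x (by rw [span_intVecs_top]; trivial) hx)

lemma eq_zero_of_qform_self {B : Matrix ι ι ℤ} (hpos : PosDefOn B (intVecs ι))
    {x : ι → ℚ} (h : qform B x x = 0) : x = 0 := by
  by_contra hx
  exact absurd h (ne_of_gt (hpos x (by rw [span_intVecs_top]; trivial) hx))

/-- norm expansion -/
lemma qform_expand {B : Matrix ι ι ℤ} (hB : B.IsSymm) (x t : ι → ℚ) :
    qform B (x + (2:ℚ) • t) (x + (2:ℚ) • t)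
      = qform B x x + 4 * qform B x t + 4 * qform B t t := by
  rw [qform_add_left, qform_add_right, qform_add_right, qform_smul_left,
    qform_smul_left, qform_smul_right, qform_smul_right, qform_comm hB t x]
  ring


variable {B : Matrix ι ι ℤ}

lemma intVecs_mem_dual (huni : UnimodularOn B (intVecs ι)) {y : ι → ℚ}
    (hy : y ∈ intVecs ι) : y ∈ dualOf B (intVecs ι) := by
  have : y ∈ ((dualOf B (intVecs ι) : AddSubgroup (ι → ℚ)) : Set (ι → ℚ)) := by
    rw [huni]; exact hy
  exact this

lemma dual_mem_intVecs (huni : UnimodularOn B (intVecs ι)) {y : ι → ℚ}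
    (hy : y ∈ dualOf B (intVecs ι)) : y ∈ intVecs ι := by
  rw [← huni]; exact hy

/-- Char(Λ) is closed under adding 2·(lattice vector). -/
lemma char_add_two_smul (huni : UnimodularOn B (intVecs ι)) {χ y : ι → ℚ}
    (hχ : χ ∈ CharOf B (intVecs ι)) (hy : y ∈ intVecs ι) :
    χ + (2:ℚ) • y ∈ CharOf B (intVecs ι) := by
  constructor
  · exact AddSubgroup.add_mem _ hχ.1 (by
      have h2 : (2:ℚ) • y = y + y := by rw [two_smul]
      rw [h2]
      exact AddSubgroup.add_mem _ (intVecs_mem_dual huni hy) (intVecs_mem_dual huni hy))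
  · intro u hu
    obtain ⟨m, hm⟩ := hχ.2 u hu
    obtain ⟨k, hk⟩ := qform_int B hy hu
    refine ⟨m + k, ?_⟩
    rw [qform_add_left, qform_smul_left]
    push_cast
    rw [hk]
    linarith [hm]

/-- Parts 1 & 2: restriction carries Short(Λ) into Short(Λᵢ). -/
lemma restrict_short (hB : B.IsSymm) (huni : UnimodularOn B (intVecs ι))
    {S : Set (ι → ℚ)} (hsub : S ⊆ intVecs ι)
    {χ : ι → ℚ} (hχ : χ ∈ ShortOf B (intVecs ι))
    {ξ : ι → ℚ} (hξ : ξ ∈ dualOf B S)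
    (hagree : ∀ u ∈ S, qform B ξ u = qform B χ u) : ξ ∈ ShortOf B S := by
  have hξchar : ξ ∈ CharOf B S := by
    refine ⟨hξ, fun u hu => ?_⟩
    rw [hagree u hu]
    exact hχ.1.2 u (hsub hu)
  refine ⟨hξchar, ?_⟩
  rintro χ' hχ' ⟨y, hy, rfl⟩
  have hyZ : y ∈ intVecs ι := hsub hy
  have hmin := hχ.2 (χ + (2:ℚ) • y) (char_add_two_smul huni hχ.1 hyZ)
    ⟨y, hyZ, rfl⟩
  rw [qform_expand hB χ y] at hmin
  rw [qform_expand hB ξ y]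
  have : qform B ξ y = qform B χ y := hagree y hy
  linarith


lemma qform_sum_left {κ : Type*} (s : Finset κ) (g : κ → (ι → ℚ)) (y : ι → ℚ) :
    qform B (∑ i ∈ s, g i) y = ∑ i ∈ s, qform B (g i) y := by
  classical
  induction s using Finset.induction with
  | empty => simp [qform_eq]
  | insert _ _ hx ih => rw [Finset.sum_insert hx, Finset.sum_insert hx, qform_add_left, ih]

lemma qform_sum_right {κ : Type*} (s : Finset κ) (g : κ → (ι → ℚ)) (y : ι → ℚ) :
    qform B y (∑ i ∈ s, g i) = ∑ i ∈ s, qform B y (g i) := by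
  classical
  induction s using Finset.induction with
  | empty => simp [qform_eq]
  | insert _ _ hx ih => rw [Finset.sum_insert hx, Finset.sum_insert hx, qform_add_right, ih]

/-- The subgroup underlying a sublattice. -/
def latSubgroup {S : Set (ι → ℚ)} (hS : IsLat S) : AddSubgroup (ι → ℚ) where
  carrier := S
  zero_mem' := hS.1
  add_mem' := by
    intro a b ha hb
    have h1 : (0 : ι → ℚ) - b ∈ S := hS.2 0 hS.1 b hb
    have h2 := hS.2 a ha _ h1
    simpa using h2
  neg_mem' := by
    intro a ha
    have := hS.2 0 hS.1 a ha
    simpa using this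

lemma isInt_num_cast {q : ℚ} (h : isInt q) : ((q.num : ℚ)) = q := by
  obtain ⟨m, rfl⟩ := h; simp

/-- A finite ℤ-basis for a sublattice of the integer vectors. -/
lemma exists_lattice_basis {S : Set (ι → ℚ)} (hS : IsLat S) (hsub : S ⊆ intVecs ι) :
    ∃ (r : ℕ) (e : Fin r → (ι → ℚ)), (∀ i, e i ∈ S) ∧ LinearIndependent ℚ e ∧
      ∀ x ∈ S, ∃ c : Fin r → ℤ, x = ∑ i, (c i : ℚ) • e i := by
  classical
  -- the coordinatewise cast map
  let f : (ι → ℤ) →ₗ[ℤ] (ι → ℚ) :=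
    { toFun := fun v i => (v i : ℚ)
      map_add' := by intro a b; funext i; simp
      map_smul' := by intro c a; funext i; push_cast; simp }
  have hfinj : Function.Injective f := by
    intro a b hab
    funext i
    have h := congrFun hab i
    have h2 : ((a i : ℚ)) = (b i : ℚ) := h
    exact_mod_cast h2
  -- the lattice as a ℤ-submodule
  let N : Submodule ℤ (ι → ℚ) := Submodule.span ℤ S
  have hNS : (N : Set (ι → ℚ)) = S := by
    have := Submodule.span_int_eq (latSubgroup hS)
    have h2 : (Submodule.span ℤ (S : Set (ι → ℚ))).toAddSubgroup = latSubgroup hS := this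
    calc (N : Set (ι → ℚ)) = ((Submodule.span ℤ (S : Set (ι → ℚ))).toAddSubgroup :
        Set (ι → ℚ)) := rfl
    _ = ((latSubgroup hS : AddSubgroup (ι → ℚ)) : Set (ι → ℚ)) := by rw [h2]
    _ = S := rfl
  let N' : Submodule ℤ (ι → ℤ) := N.comap f
  obtain ⟨r, bN⟩ := Submodule.basisOfPid (Pi.basisFun ℤ ι) N'
  refine ⟨r, fun i => f (bN i : ι → ℤ), ?_, ?_, ?_⟩
  · intro i
    have : f (bN i : ι → ℤ) ∈ N := (bN i).2
    rw [← hNS]; exact this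
  · have h1 : LinearIndependent ℤ (fun i : Fin r => (bN i : ι → ℤ)) :=
      bN.linearIndependent.map' N'.subtype N'.ker_subtype
    have h2 : LinearIndependent ℤ (fun i : Fin r => f (bN i : ι → ℤ)) := by
      have := h1.map' f (LinearMap.ker_eq_bot.mpr hfinj)
      exact this
    exact (LinearIndependent.iff_fractionRing ℤ ℚ).mp h2
  · intro x hx
    have hxN : x ∈ N := by rw [← SetLike.mem_coe, hNS]; exact hx
    -- preimage of x
    let v : ι → ℤ := fun i => (x i).num
    have hfv : f v = x := by
      funext i
      exact isInt_num_cast (hsub hx i)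
    have hvN' : v ∈ N' := by
      show f v ∈ N
      rw [hfv]; exact hxN
    -- basis representation
    have hrepr := bN.sum_repr ⟨v, hvN'⟩
    refine ⟨fun i => bN.repr ⟨v, hvN'⟩ i, ?_⟩
    have := congrArg (fun (w : N') => f (w : ι → ℤ)) hrepr
    simp only at this
    rw [← hfv]
    rw [← this]
    have hcoe : ((∑ i, bN.repr ⟨v, hvN'⟩ i • bN i : N') : ι → ℤ)
        = ∑ i, bN.repr ⟨v, hvN'⟩ i • (bN i : ι → ℤ) := by
      simp only [Submodule.coe_sum, Submodule.coe_smul]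
    rw [hcoe, map_sum]
    refine Finset.sum_congr rfl fun i _ => ?_
    rw [LinearMap.map_smul]
    rw [Int.cast_smul_eq_zsmul ℚ]


/-- Primitive sublattices are saturated: Λ ∩ span(S) = S. -/
lemma saturated (hpos : PosDefOn B (intVecs ι)) (huni : UnimodularOn B (intVecs ι))
    {S : Set (ι → ℚ)} (hS : IsLat S) (hsub : S ⊆ intVecs ι)
    (hprim : PrimitiveIn B (intVecs ι) S)
    {x : ι → ℚ} (hx : x ∈ intVecs ι) (hxsp : x ∈ Submodule.span ℚ S) : x ∈ S := by
  classical
  obtain ⟨r, e, heS, hind, hrep⟩ := exists_lattice_basis hS hsub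
  have hspan : Submodule.span ℚ (Set.range e) = Submodule.span ℚ S := by
    apply le_antisymm
    · rw [Submodule.span_le]
      rintro _ ⟨i, rfl⟩
      exact Submodule.subset_span (heS i)
    · rw [Submodule.span_le]
      intro u hu
      obtain ⟨c, rfl⟩ := hrep u hu
      exact Submodule.sum_mem _ fun i _ =>
        Submodule.smul_mem _ _ (Submodule.subset_span ⟨i, rfl⟩)
  -- Gram matrix of the basis
  set G : Matrix (Fin r) (Fin r) ℚ := Matrix.of fun i j => qform B (e i) (e j) with hG
  have hdet : G.det ≠ 0 := by
    intro h
    obtain ⟨v, hv0, hGv⟩ := (Matrix.exists_mulVec_eq_zero_iff).mpr h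
    set u := ∑ j, v j • e j with hu
    have hque : ∀ i, qform B (e i) u = 0 := by
      intro i
      rw [hu, qform_sum_right]
      have : ∀ j, qform B (e i) (v j • e j) = G i j * v j := fun j => by
        rw [qform_smul_right]; rw [hG]; simp [Matrix.of_apply]; ring
      rw [Finset.sum_congr rfl fun j _ => this j]
      have := congrFun hGv i
      simpa [Matrix.mulVec, dotProduct] using this
    have huu : qform B u u = 0 := by
      rw [hu, qform_sum_left]
      refine Finset.sum_eq_zero fun i _ => ?_
      rw [qform_smul_left, ← hu, hque i, mul_zero]
    have hu0 : u = 0 := eq_zero_of_qform_self hpos huu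
    apply hv0
    funext i
    exact Fintype.linearIndependent_iff.mp hind v (by rw [← hu, hu0]) i
  have hGunit : IsUnit G.det := isUnit_iff_ne_zero.mpr hdet
  set w : Fin r → (ι → ℚ) := fun i => ∑ j, G⁻¹ i j • e j with hw
  have hwe : ∀ i k, qform B (w i) (e k) = if i = k then 1 else 0 := by
    intro i k
    rw [hw]
    simp only
    rw [qform_sum_left]
    have : ∀ j, qform B (G⁻¹ i j • e j) (e k) = G⁻¹ i j * G j k := fun j => by
      rw [qform_smul_left]; rfl
    rw [Finset.sum_congr rfl fun j _ => this j]
    have hmul := Matrix.nonsing_inv_mul G hGunit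
    have := congrFun (congrFun hmul i) k
    simpa [Matrix.mul_apply, Matrix.one_apply] using this
  have hwdual : ∀ i, w i ∈ dualOf B S := by
    intro i
    constructor
    · rw [hw]
      exact Submodule.sum_mem _ fun j _ =>
        Submodule.smul_mem _ _ (Submodule.subset_span (heS j))
    · intro u hu
      obtain ⟨c, rfl⟩ := hrep u hu
      rw [qform_sum_right]
      have : ∀ k, qform B (w i) ((c k : ℚ) • e k)
          = (c k : ℚ) * (if i = k then 1 else 0) := fun k => by
        rw [qform_smul_right, hwe]
      rw [Finset.sum_congr rfl fun k _ => this k]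
      simp only [mul_ite, mul_one, mul_zero]
      rw [Finset.sum_ite_eq Finset.univ i (fun k => (c k : ℚ))]
      simp only [Finset.mem_univ, if_true]
      exact isInt_intCast _
  -- coordinates of x
  rw [← hspan] at hxsp
  obtain ⟨c, hc⟩ := (Submodule.mem_span_range_iff_exists_fun ℚ).mp hxsp
  have hci : ∀ i, isInt (c i) := by
    intro i
    obtain ⟨z, hz, hagree⟩ := hprim (w i) (hwdual i)
    have hzint : z ∈ intVecs ι := dual_mem_intVecs huni hz
    have h1 : qform B (w i) x = c i := by
      rw [← hc, qform_sum_right]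
      have : ∀ k, qform B (w i) (c k • e k) = c k * (if i = k then 1 else 0) := fun k => by
        rw [qform_smul_right, hwe]
      rw [Finset.sum_congr rfl fun k _ => this k]
      simp only [mul_ite, mul_one, mul_zero]
      rw [Finset.sum_ite_eq Finset.univ i c]
      simp
    have h2 : qform B z x = qform B (w i) x := by
      refine qform_eqOn_span hagree x ?_
      rw [← hspan]; exact hxsp
    rw [← h1, ← h2]
    exact qform_int B hzint hx
  choose m hm using hci
  have : x ∈ latSubgroup hS := by
    rw [← hc]
    refine AddSubgroup.sum_mem _ fun i _ => ?_
    rw [hm i, Int.cast_smul_eq_zsmul ℚ]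
    exact AddSubgroup.zsmul_mem _ (heS i) _
  exact this


section Parity

lemma zmod2_mul_self : ∀ x : ZMod 2, x * x = x := by decide
lemma zmod2_add_self : ∀ x : ZMod 2, x + x = 0 := by decide

/-- Parity: for integer vectors, `yᵀBy ≡ Σ Bⱼⱼyⱼ (mod 2)`. -/
lemma parity_int (hB : B.IsSymm) (n : ι → ℤ) :
    ∃ k : ℤ, ∑ i, ∑ j, n i * B i j * n j = ∑ j, B j j * n j + 2 * k := by
  classical
  have hdvd : (2 : ℤ) ∣ (∑ i, ∑ j, n i * B i j * n j) - ∑ j, B j j * n j := by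
    have hz : (((∑ i, ∑ j, n i * B i j * n j) - ∑ j, B j j * n j : ℤ) : ZMod 2) = 0 := by
      push_cast
      set a : ι → ZMod 2 := fun i => ((n i : ℤ) : ZMod 2) with ha
      set b : ι → ι → ZMod 2 := fun i j => ((B i j : ℤ) : ZMod 2) with hb
      have hbs : ∀ i j, b i j = b j i := by
        intro i j; rw [hb]; simp only; rw [← hB.apply j i]
      have hprod : ∑ i, ∑ j, a i * b i j * a j
          = ∑ p ∈ (Finset.univ ×ˢ Finset.univ : Finset (ι × ι)),
              a p.1 * b p.1 p.2 * a p.2 := by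
        rw [Finset.sum_product]
      have hsplit := Finset.sum_filter_add_sum_filter_not
        (Finset.univ ×ˢ Finset.univ : Finset (ι × ι)) (fun p => p.1 = p.2)
        (fun p => a p.1 * b p.1 p.2 * a p.2)
      have hfilt : (Finset.univ ×ˢ Finset.univ : Finset (ι × ι)).filter
            (fun p => p.1 = p.2) = Finset.univ.image (fun i => (i, i)) := by
        ext p
        simp only [Finset.mem_filter, Finset.mem_product, Finset.mem_image,
          Finset.mem_univ, true_and]
        constructor
        · intro h
          obtain ⟨x, y⟩ := p
          cases h
          exact ⟨x, rfl⟩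
        · rintro ⟨i, rfl⟩; rfl
      have hdiag : ∑ p ∈ (Finset.univ ×ˢ Finset.univ : Finset (ι × ι)).filter
            (fun p => p.1 = p.2), a p.1 * b p.1 p.2 * a p.2
          = ∑ i, b i i * a i := by
        rw [hfilt, Finset.sum_image (by intro x _ y _ h; exact (Prod.ext_iff.mp h).1)]
        refine Finset.sum_congr rfl fun i _ => ?_
        have : a i * b i i * a i = b i i * (a i * a i) := by ring
        rw [this, zmod2_mul_self]
      have hoff : ∑ p ∈ (Finset.univ ×ˢ Finset.univ : Finset (ι × ι)).filter
            (fun p => ¬ p.1 = p.2), a p.1 * b p.1 p.2 * a p.2 = 0 := by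
        have g_mem : ∀ (p : ι × ι) (hp : p ∈ (Finset.univ ×ˢ Finset.univ :
              Finset (ι × ι)).filter (fun p => ¬ p.1 = p.2)),
            Prod.swap p ∈ (Finset.univ ×ˢ Finset.univ :
              Finset (ι × ι)).filter (fun p => ¬ p.1 = p.2) := by
          intro p hp
          have h2 := (Finset.mem_filter.mp hp).2
          refine Finset.mem_filter.mpr ⟨Finset.mem_product.mpr
            ⟨Finset.mem_univ _, Finset.mem_univ _⟩, ?_⟩
          simp only [Prod.fst_swap, Prod.snd_swap]
          exact fun h => h2 h.symm
        refine Finset.sum_involution (fun p _ => Prod.swap p) ?_ ?_ g_mem ?_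
        · intro p _
          simp only [Prod.fst_swap, Prod.snd_swap]
          rw [hbs p.2 p.1]
          have : a p.1 * b p.1 p.2 * a p.2 + a p.2 * b p.1 p.2 * a p.1
              = a p.1 * b p.1 p.2 * a p.2 + a p.1 * b p.1 p.2 * a p.2 := by ring
          rw [this]
          exact zmod2_add_self _
        · intro p hp _
          have h2 := (Finset.mem_filter.mp hp).2
          intro hc
          apply h2
          have := congrArg Prod.fst hc
          simp only [Prod.fst_swap] at this
          exact this.symm
        · intro p _; exact Prod.swap_swap p
      rw [hprod, ← hsplit, hdiag, hoff, add_zero, sub_eq_zero]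
    exact (ZMod.intCast_zmod_eq_zero_iff_dvd _ 2).mp hz
  obtain ⟨k, hk⟩ := hdvd
  exact ⟨k, by linarith⟩

end Parity


/-- The rational Gram matrix has nonzero determinant when positive definite. -/
lemma gram_det_ne_zero (hpos : PosDefOn B (intVecs ι)) :
    (B.map (Int.cast : ℤ → ℚ)).det ≠ 0 := by
  intro h
  obtain ⟨v, hv0, hv⟩ := (Matrix.exists_mulVec_eq_zero_iff).mpr h
  apply hv0
  apply eq_zero_of_qform_self hpos
  show v ⬝ᵥ ((B.map (Int.cast : ℤ → ℚ)) *ᵥ v) = 0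
  rw [hv, dotProduct_zero]

/-- Existence of a characteristic covector for the full lattice. -/
lemma exists_char (hB : B.IsSymm) (hpos : PosDefOn B (intVecs ι)) :
    ∃ χ₀ : ι → ℚ, χ₀ ∈ CharOf B (intVecs ι) := by
  classical
  set A := B.map (Int.cast : ℤ → ℚ) with hA
  have hAdet : A.det ≠ 0 := gram_det_ne_zero hpos
  have hAsymm : Aᵀ = A := by
    rw [hA, ← Matrix.transpose_map]
    rw [hB]
  set d : ι → ℚ := fun j => (B j j : ℚ) with hd
  set χ₀ : ι → ℚ := A⁻¹ *ᵥ d with hχ₀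
  have key : ∀ y : ι → ℚ, qform B χ₀ y = ∑ j, (B j j : ℚ) * y j := by
    intro y
    show χ₀ ⬝ᵥ (A *ᵥ y) = _
    rw [dotProduct_mulVec]
    have hvm : χ₀ ᵥ* A = d := by
      rw [← hAsymm, Matrix.vecMul_transpose, hχ₀, Matrix.mulVec_mulVec,
        Matrix.mul_nonsing_inv A (isUnit_iff_ne_zero.mpr hAdet), Matrix.one_mulVec]
    rw [hvm]
    rfl
  refine ⟨χ₀, ⟨⟨by rw [span_intVecs_top]; trivial, fun y hy => ?_⟩, fun y hy => ?_⟩⟩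
  · rw [key y]
    exact isInt_sum fun j _ => isInt_mul (isInt_intCast _) (hy j)
  · set n : ι → ℤ := fun i => (y i).num with hn
    have hyn : ∀ i, y i = (n i : ℚ) := fun i => (isInt_num_cast (hy i)).symm
    obtain ⟨k, hk⟩ := parity_int hB n
    refine ⟨-k, ?_⟩
    have hyy : qform B y y = ((∑ i, ∑ j, n i * B i j * n j : ℤ) : ℚ) := by
      rw [qform_eq]
      push_cast
      exact Finset.sum_congr rfl fun i _ => Finset.sum_congr rfl fun j _ => by
        rw [hyn i, hyn j]
    have hky : qform B χ₀ y = ((∑ j, B j j * n j : ℤ) : ℚ) := by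
      rw [key y]
      push_cast
      exact Finset.sum_congr rfl fun j _ => by rw [hyn j]
    rw [hyy, hky, hk]
    push_cast
    ring

variable {S₁ S₂ : Set (ι → ℚ)}

/-- Orthogonality extends to spans. -/
lemma orth_span (hB : B.IsSymm) (horth : OrthogonalSets B S₁ S₂) :
    ∀ a ∈ Submodule.span ℚ S₁, ∀ b ∈ Submodule.span ℚ S₂, qform B a b = 0 := by
  intro a ha b hb
  have h1 : ∀ u ∈ S₁, qform B u b = 0 := by
    intro u hu
    have h := qform_eqOn_span (B := B) (a := u) (b := 0) (S := S₂)
      (fun w hw => by rw [horth u hu w hw, qform_zero_left]) b hb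
    rw [h, qform_zero_left]
  have h2 : ∀ u ∈ S₁, qform B b u = 0 := fun u hu => by
    rw [qform_comm hB]; exact h1 u hu
  have h := qform_eqOn_span (B := B) (a := b) (b := 0) (S := S₁)
    (fun w hw => by rw [h2 w hw, qform_zero_left]) a ha
  rw [qform_comm hB, h, qform_zero_left]

/-- Complementary spans decompose the whole space. -/
lemma decomp (hB : B.IsSymm) (hpos : PosDefOn B (intVecs ι))
    (horth : OrthogonalSets B S₁ S₂)
    (hrk : rkOf S₁ + rkOf S₂ = rkOf (intVecs ι)) (x : ι → ℚ) :
    ∃ a ∈ Submodule.span ℚ S₁, ∃ b ∈ Submodule.span ℚ S₂, x = a + b := by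
  set V₁ := Submodule.span ℚ S₁ with hV₁
  set V₂ := Submodule.span ℚ S₂ with hV₂
  have hinf : V₁ ⊓ V₂ = ⊥ := by
    rw [eq_bot_iff]
    intro v hv
    have h0 : qform B v v = 0 := orth_span hB horth v hv.1 v hv.2
    rw [Submodule.mem_bot]
    exact eq_zero_of_qform_self hpos h0
  have hfin := Submodule.finrank_sup_add_finrank_inf_eq V₁ V₂
  rw [hinf, finrank_bot, add_zero] at hfin
  have hrk2 : rkOf (intVecs ι) = Module.finrank ℚ (ι → ℚ) := by
    unfold rkOf
    rw [span_intVecs_top]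
    exact finrank_top ℚ (ι → ℚ)
  have htop : V₁ ⊔ V₂ = ⊤ := by
    apply Submodule.eq_top_of_finrank_eq
    rw [hfin]
    show rkOf S₁ + rkOf S₂ = _
    rw [hrk, hrk2]
  have hx : x ∈ V₁ ⊔ V₂ := by rw [htop]; trivial
  obtain ⟨a, ha, b, hb, hab⟩ := Submodule.mem_sup.mp hx
  exact ⟨a, ha, b, hb, hab.symm⟩


lemma intVecs_add {x y : ι → ℚ} (hx : x ∈ intVecs ι) (hy : y ∈ intVecs ι) :
    x + y ∈ intVecs ι := fun i => isInt_add (hx i) (hy i)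
lemma intVecs_sub {x y : ι → ℚ} (hx : x ∈ intVecs ι) (hy : y ∈ intVecs ι) :
    x - y ∈ intVecs ι := fun i => isInt_sub (hx i) (hy i)
lemma intVecs_neg {x : ι → ℚ} (hx : x ∈ intVecs ι) : -x ∈ intVecs ι :=
  fun i => isInt_neg (hx i)
lemma intVecs_two_smul {x : ι → ℚ} (hx : x ∈ intVecs ι) : (2:ℚ) • x ∈ intVecs ι := by
  rw [two_smul]; exact intVecs_add hx hx

lemma isInt_nonneg_nat {q : ℚ} (h : isInt q) (h0 : 0 ≤ q) : ∃ m : ℕ, q = (m : ℚ) := by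
  obtain ⟨m, rfl⟩ := h
  have : 0 ≤ m := by exact_mod_cast h0
  exact ⟨m.toNat, by exact_mod_cast (congrArg (Int.cast : ℤ → ℚ) (Int.toNat_of_nonneg this)).symm⟩

/-- Characteristic covectors of a sublattice are stable under adding `2·(lattice vector)`. -/
lemma char_add_two_smul_sub {S : Set (ι → ℚ)} (hsub : S ⊆ intVecs ι)
    {χ t : ι → ℚ} (hχ : χ ∈ CharOf B S) (ht : t ∈ S) :
    χ + (2:ℚ) • t ∈ CharOf B S := by
  have htd : t ∈ dualOf B S :=
    ⟨Submodule.subset_span ht, fun u hu => qform_int B (hsub ht) (hsub hu)⟩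
  constructor
  · refine AddSubgroup.add_mem _ hχ.1 ?_
    rw [two_smul]
    exact AddSubgroup.add_mem _ htd htd
  · intro u hu
    obtain ⟨m, hm⟩ := hχ.2 u hu
    obtain ⟨k, hk⟩ := qform_int B (hsub ht) (hsub hu)
    refine ⟨m + k, ?_⟩
    rw [qform_add_left, qform_smul_left, hk]
    push_cast
    linarith [hm]

/-- Main transfer: surjectivity onto Short(S₁) implies surjectivity onto Short(S₂). -/
lemma surj_transfer (hB : B.IsSymm) (hpos : PosDefOn B (intVecs ι))
    (huni : UnimodularOn B (intVecs ι))
    {S₁ S₂ : Set (ι → ℚ)} (h₁ : IsLat S₁) (h₂ : IsLat S₂)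
    (hsub₁ : S₁ ⊆ intVecs ι) (hsub₂ : S₂ ⊆ intVecs ι)
    (horth : OrthogonalSets B S₁ S₂)
    (hrk : rkOf S₁ + rkOf S₂ = rkOf (intVecs ι))
    (hprim₂ : PrimitiveIn B (intVecs ι) S₂)
    (hsurj : ∀ ξ ∈ ShortOf B S₁, ∃ χ ∈ ShortOf B (intVecs ι),
        ∀ u ∈ S₁, qform B χ u = qform B ξ u) :
    ∀ ξ ∈ ShortOf B S₂, ∃ χ ∈ ShortOf B (intVecs ι),
        ∀ u ∈ S₂, qform B χ u = qform B ξ u := by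
  classical
  intro ξ₂ hξ₂
  have hξ₂span : ξ₂ ∈ Submodule.span ℚ S₂ := hξ₂.1.1.1
  -- Step 1: a characteristic covector of Λ restricting to ξ₂ on S₂
  obtain ⟨z, hz, hzagree⟩ := hprim₂ ξ₂ hξ₂.1.1
  have hzint : z ∈ intVecs ι := dual_mem_intVecs huni hz
  obtain ⟨χ₀, hχ₀⟩ := exists_char hB hpos
  have hχ₀int : χ₀ ∈ intVecs ι := dual_mem_intVecs huni hχ₀.1
  set c : ι → ℚ := χ₀ - z with hc
  have hcint : c ∈ intVecs ι := intVecs_sub hχ₀int hzint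
  have hceven : ∀ u ∈ S₂, ∃ m : ℤ, qform B c u = 2 * (m : ℚ) := by
    intro u hu
    obtain ⟨m₁, hm₁⟩ := hχ₀.2 u (hsub₂ hu)
    obtain ⟨m₂, hm₂⟩ := hξ₂.1.2 u hu
    refine ⟨m₁ - m₂, ?_⟩
    rw [hc, qform_sub_left, hzagree u hu]
    push_cast
    linarith
  obtain ⟨c₁, hc₁, c₂, hc₂, hcdec⟩ := decomp hB hpos horth hrk c
  have hc₂agree : ∀ u ∈ S₂, qform B c₂ u = qform B c u := by
    intro u hu
    rw [hcdec, qform_add_left, orth_span hB horth c₁ hc₁ u (Submodule.subset_span hu),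
      zero_add]
  have hhalf : (2⁻¹ : ℚ) • c₂ ∈ dualOf B S₂ := by
    refine ⟨Submodule.smul_mem _ _ hc₂, fun u hu => ?_⟩
    rw [qform_smul_left, hc₂agree u hu]
    obtain ⟨m, hm⟩ := hceven u hu
    exact ⟨m, by rw [hm]; ring⟩
  obtain ⟨d, hd, hdagree⟩ := hprim₂ _ hhalf
  have hdint : d ∈ intVecs ι := dual_mem_intVecs huni hd
  set χc : ι → ℚ := χ₀ + (2:ℚ) • (-d) with hχc
  have hχcchar : χc ∈ CharOf B (intVecs ι) :=
    char_add_two_smul huni hχ₀ (intVecs_neg hdint)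
  have hχcint : χc ∈ intVecs ι := dual_mem_intVecs huni hχcchar.1
  have hχcagree : ∀ u ∈ S₂, qform B χc u = qform B ξ₂ u := by
    intro u hu
    rw [hχc, qform_add_left, qform_smul_left, qform_neg_left, hdagree u hu,
      qform_smul_left, hc₂agree u hu]
    have := hzagree u hu
    rw [hc, qform_sub_left]
    rw [this]
    ring
  -- Step 2: minimize the norm over χc + 2S₁
  have hval : ∀ y ∈ S₁, ∃ m : ℕ,
      qform B (χc + (2:ℚ) • y) (χc + (2:ℚ) • y) = (m : ℚ) := by
    intro y hy
    have hint : χc + (2:ℚ) • y ∈ intVecs ι :=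
      intVecs_add hχcint (intVecs_two_smul (hsub₁ hy))
    exact isInt_nonneg_nat (qform_int B hint hint) (qform_nonneg hpos _)
  have hex : ∃ m : ℕ, ∃ y ∈ S₁, qform B (χc + (2:ℚ) • y) (χc + (2:ℚ) • y) = (m : ℚ) := by
    obtain ⟨m, hm⟩ := hval 0 h₁.1
    exact ⟨m, 0, h₁.1, hm⟩
  set m₀ := Nat.find hex with hm₀
  obtain ⟨y₀, hy₀, hy₀val⟩ := Nat.find_spec hex
  set χs : ι → ℚ := χc + (2:ℚ) • y₀ with hχs
  have hχschar : χs ∈ CharOf B (intVecs ι) := char_add_two_smul huni hχcchar (hsub₁ hy₀)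
  have hχsint : χs ∈ intVecs ι := dual_mem_intVecs huni hχschar.1
  have hχsagree : ∀ u ∈ S₂, qform B χs u = qform B ξ₂ u := by
    intro u hu
    rw [hχs, qform_add_left, qform_smul_left, horth y₀ hy₀ u hu, hχcagree u hu]
    ring
  have hχsmin : ∀ y ∈ S₁, qform B χs χs ≤ qform B (χs + (2:ℚ) • y) (χs + (2:ℚ) • y) := by
    intro y hy
    have hsum : χs + (2:ℚ) • y = χc + (2:ℚ) • (y₀ + y) := by
      rw [hχs, smul_add]; abel
    have hyS : y₀ + y ∈ S₁ := by
      have := (latSubgroup h₁).add_mem hy₀ hy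
      exact this
    obtain ⟨m', hm'⟩ := hval _ hyS
    have : m₀ ≤ m' := Nat.find_min' hex ⟨_, hyS, hm'⟩
    rw [hsum, hm', hy₀val]
    exact_mod_cast this
  -- Step 3: decompose χs and show its S₁-part is short
  obtain ⟨a, ha, b, hb, habdec⟩ := decomp hB hpos horth hrk χs
  have haagree : ∀ u ∈ S₁, qform B a u = qform B χs u := by
    intro u hu
    rw [habdec, qform_add_left]
    rw [qform_comm hB b u, orth_span hB horth u (Submodule.subset_span hu) b hb]
    ring
  have hbagree : ∀ u ∈ S₂, qform B b u = qform B χs u := by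
    intro u hu
    rw [habdec, qform_add_left, orth_span hB horth a ha u (Submodule.subset_span hu)]
    ring
  have hbξ : b = ξ₂ := by
    have hbd : b - ξ₂ ∈ Submodule.span ℚ S₂ := Submodule.sub_mem _ hb hξ₂span
    have hz2 : ∀ u ∈ S₂, qform B (b - ξ₂) u = qform B 0 u := by
      intro u hu
      rw [qform_sub_left, hbagree u hu, hχsagree u hu, qform_zero_left]
      ring
    have h0 : qform B (b - ξ₂) (b - ξ₂) = 0 := by
      rw [qform_eqOn_span hz2 _ hbd, qform_zero_left]
    have := eq_zero_of_qform_self hpos h0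
    rwa [sub_eq_zero] at this
  have hashort : a ∈ ShortOf B S₁ := by
    have hadual : a ∈ dualOf B S₁ := by
      refine ⟨ha, fun u hu => ?_⟩
      rw [haagree u hu]
      exact qform_int B hχsint (hsub₁ hu)
    refine ⟨⟨hadual, fun u hu => ?_⟩, ?_⟩
    · rw [haagree u hu]
      exact hχschar.2 u (hsub₁ hu)
    · rintro χ' hχ' ⟨y, hy, rfl⟩
      rw [qform_expand hB a y]
      have hay : qform B a y = qform B χs y := haagree y hy
      have := hχsmin y hy
      rw [qform_expand hB χs y] at this
      linarith
  -- Step 4: use surjectivity onto Short(S₁) and pull back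
  obtain ⟨χ', hχ'short, hχ'agree⟩ := hsurj a hashort
  have hχ'int : χ' ∈ intVecs ι := dual_mem_intVecs huni hχ'short.1.1
  set t : ι → ℚ := (2⁻¹ : ℚ) • (χ' - χs) with hts
  have hχ'eq : χ' = χs + (2:ℚ) • t := by
    rw [hts, smul_smul]
    norm_num
  have htint : t ∈ intVecs ι := by
    apply dual_mem_intVecs huni
    refine ⟨by rw [span_intVecs_top]; trivial, fun u hu => ?_⟩
    obtain ⟨m₁, hm₁⟩ := hχ'short.1.2 u hu
    obtain ⟨m₂, hm₂⟩ := hχschar.2 u hu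
    refine ⟨m₁ - m₂, ?_⟩
    rw [hts, qform_smul_left, qform_sub_left]
    push_cast
    linarith
  have htorth : ∀ u ∈ S₁, qform B t u = qform B 0 u := by
    intro u hu
    rw [hts, qform_smul_left, qform_sub_left, hχ'agree u hu, haagree u hu,
      qform_zero_left]
    ring
  obtain ⟨t₁, ht₁, t₂, ht₂, htdec⟩ := decomp hB hpos horth hrk t
  have ht₁0 : t₁ = 0 := by
    have hspan0 : qform B t t₁ = 0 := by
      rw [qform_eqOn_span htorth t₁ ht₁, qform_zero_left]
    have h21 : qform B t₂ t₁ = 0 := by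
      rw [qform_comm hB]
      exact orth_span hB horth t₁ ht₁ t₂ ht₂
    have h0 : qform B t₁ t₁ = 0 := by
      have hsum : qform B t t₁ = qform B t₁ t₁ + qform B t₂ t₁ := by
        conv_lhs => rw [htdec]
        rw [qform_add_left]
      rw [hspan0, h21] at hsum
      linarith
    exact eq_zero_of_qform_self hpos h0
  have htV₂ : t ∈ Submodule.span ℚ S₂ := by
    rw [htdec, ht₁0, zero_add]
    exact ht₂
  have htS₂ : t ∈ S₂ := saturated hpos huni h₂ hsub₂ hprim₂ htint htV₂
  -- norms compare
  have hnorm : qform B χs χs ≤ qform B χ' χ' := by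
    have hξ₂min := hξ₂.2 (ξ₂ + (2:ℚ) • t) (char_add_two_smul_sub hsub₂ hξ₂.1 htS₂)
      ⟨t, htS₂, rfl⟩
    rw [qform_expand hB ξ₂ t] at hξ₂min
    have hχst : qform B χs t = qform B ξ₂ t := by
      rw [habdec, qform_add_left, hbξ, orth_span hB horth a ha t htV₂]
      ring
    rw [hχ'eq, qform_expand hB χs t, hχst]
    linarith
  -- χs is short
  have hχsshort : χs ∈ ShortOf B (intVecs ι) := by
    refine ⟨hχschar, ?_⟩
    rintro χ'' hχ'' ⟨y, hy, rfl⟩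
    have hyt : χs + (2:ℚ) • y = χ' + (2:ℚ) • (y - t) := by
      rw [hχ'eq, smul_sub]; abel
    have h2 := hχ'short.2 (χs + (2:ℚ) • y) hχ'' (⟨y - t, intVecs_sub hy (hsub₂ htS₂), hyt⟩)
    linarith
  exact ⟨χs, hχsshort, fun u hu => hχsagree u hu⟩



end LatticeDefs

/-- An abstract integral lattice, presented by its Gram matrix. -/
structure IntLattice where
  n : ℕ
  B : Matrix (Fin n) (Fin n) ℤ
  symm : B.IsSymm
  nondeg : B.det ≠ 0

/-- The Gram matrix of the orthogonal direct sum `Λ₁ ⊥ Λ₂`. -/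
def glueGram (L₁ L₂ : IntLattice) :
    Matrix (Fin L₁.n ⊕ Fin L₂.n) (Fin L₁.n ⊕ Fin L₂.n) ℤ :=
  Matrix.fromBlocks L₁.B 0 0 L₂.B

/-- The glue lattice `Λ₁ ⊕_ψ Λ₂ = {x + y ∈ Λ₁* ⊕ Λ₂* : ψ(x̄) = ȳ}`. -/
def glueSet (L₁ L₂ : IntLattice)
    (ψ : disc L₁.B (intVecs (Fin L₁.n)) ≃+ disc L₂.B (intVecs (Fin L₂.n))) :
    Set (Fin L₁.n ⊕ Fin L₂.n → ℚ) :=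
  {w | ∃ (h₁ : (w ∘ Sum.inl) ∈ dualOf L₁.B (intVecs (Fin L₁.n)))
        (h₂ : (w ∘ Sum.inr) ∈ dualOf L₂.B (intVecs (Fin L₂.n))),
        ψ (dmk _ _ h₁) = dmk _ _ h₂}

/-- `Λ₁` embedded in the first factor of `Λ₁* ⊕ Λ₂*`. -/
def inlLat (L₁ L₂ : IntLattice) : Set (Fin L₁.n ⊕ Fin L₂.n → ℚ) :=
  {w | (w ∘ Sum.inl) ∈ intVecs (Fin L₁.n) ∧ w ∘ Sum.inr = 0}

/-- `Λ₂` embedded in the second factor of `Λ₁* ⊕ Λ₂*`. -/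
def inrLat (L₁ L₂ : IntLattice) : Set (Fin L₁.n ⊕ Fin L₂.n → ℚ) :=
  {w | (w ∘ Sum.inr) ∈ intVecs (Fin L₂.n) ∧ w ∘ Sum.inl = 0}

/-- Stabilization `S ⊕ ℤᵏ`. -/
def stabSet {ι : Type} [Fintype ι] [DecidableEq ι] (S : Set (ι → ℚ)) (k : ℕ) :
    Set (ι ⊕ Fin k → ℚ) :=
  {w | (w ∘ Sum.inl) ∈ S ∧ ∀ j, isInt (w (Sum.inr j))}

/-- A finite loopless multigraph, with a reference orientation of each edge. -/
structure MultiGraph where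
  nV : ℕ
  nE : ℕ
  hd : Fin nE → Fin nV
  tl : Fin nE → Fin nV
  loopless : ∀ e, hd e ≠ tl e

namespace MultiGraph

/-- The boundary map `C₁(G;ℚ) → C₀(G;ℚ)`, `∂ e = head(e) − tail(e)`. -/
def bndry (G : MultiGraph) (x : Fin G.nE → ℚ) : Fin G.nV → ℚ :=
  fun v => ∑ e, x e * ((if G.hd e = v then 1 else 0) - (if G.tl e = v then 1 else 0))

/-- The flow lattice `ℱ(G) = ker ∂ ∩ C₁(G;ℤ)`. -/
def flowSet (G : MultiGraph) : Set (Fin G.nE → ℚ) :=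
  {x | (∀ e, isInt (x e)) ∧ G.bndry x = 0}

/-- The cut lattice `𝒞(G) = im ∂* ∩ C₁(G;ℤ)`. -/
def cutSet (G : MultiGraph) : Set (Fin G.nE → ℚ) :=
  {x | (∀ e, isInt (x e)) ∧ ∃ g : Fin G.nV → ℚ, ∀ e, x e = g (G.hd e) - g (G.tl e)}

/-- Reachability using only edges from the set `A`. -/
def ReachIn (G : MultiGraph) (A : Set (Fin G.nE)) : Fin G.nV → Fin G.nV → Prop :=
  Relation.ReflTransGen
    (fun u v => ∃ e ∈ A, (G.hd e = u ∧ G.tl e = v) ∨ (G.hd e = v ∧ G.tl e = u))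

def Connected (G : MultiGraph) : Prop := ∀ u v, G.ReachIn Set.univ u v

/-- 2-edge-connectedness: connected, and removing any one edge leaves it connected. -/
def TwoEdgeConnected (G : MultiGraph) : Prop :=
  G.Connected ∧ ∀ e : Fin G.nE, ∀ u v, G.ReachIn {e}ᶜ u v

/-- `C` is the edge set of a cycle of `G`. -/
def IsCycleEdgeSet (G : MultiGraph) (C : Set (Fin G.nE)) : Prop :=
  ∃ k : ℕ, 0 < k ∧ ∃ (e : Fin k → Fin G.nE) (v : Fin k → Fin G.nV),
    Function.Injective e ∧ Function.Injective v ∧ C = Set.range e ∧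
    ∀ i, (G.hd (e i) = v (finRotate k i) ∧ G.tl (e i) = v i) ∨
         (G.tl (e i) = v (finRotate k i) ∧ G.hd (e i) = v i)

/-- A maximal spanning forest: acyclic and realizing all of `G`'s reachability. -/
def IsMaxForest (G : MultiGraph) (F : Finset (Fin G.nE)) : Prop :=
  (∀ C, G.IsCycleEdgeSet C → ¬(C ⊆ (↑F : Set (Fin G.nE)))) ∧
  ∀ u v, G.ReachIn Set.univ u v → G.ReachIn (↑F) u v

open Classical in
/-- The fundamental cut vector of `e ∈ F`:
`+1` on edges leaving the component `K₁` of the tail of `e` in `F − e`,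
`−1` on edges entering it, `0` otherwise. -/
noncomputable def cutVec (G : MultiGraph) (F : Finset (Fin G.nE)) (e : Fin G.nE) :
    Fin G.nE → ℚ := fun j =>
  (if G.ReachIn (↑(F.erase e)) (G.tl j) (G.tl e) then 1 else 0)
    - (if G.ReachIn (↑(F.erase e)) (G.hd j) (G.tl e) then 1 else 0)

/-- `x` is the fundamental cycle vector of `e ∉ F`: the unique flow supported on
`F ∪ {e}` whose coefficient on `e` is `+1`. -/
def IsFundCycleVec (G : MultiGraph) (F : Finset (Fin G.nE)) (e : Fin G.nE)
    (x : Fin G.nE → ℚ) : Prop :=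
  G.bndry x = 0 ∧ (∀ j, j ∉ F → j ≠ e → x j = 0) ∧ x e = 1

/-- Reorienting the edges of `G`: `o e = true` keeps the reference direction. -/
def reorient (G : MultiGraph) (o : Fin G.nE → Bool) : MultiGraph :=
  { G with
    hd := fun e => if o e then G.hd e else G.tl e
    tl := fun e => if o e then G.tl e else G.hd e
    loopless := by
      intro e
      by_cases h : o e = true
      · simpa [h] using G.loopless e
      · simpa [h] using (G.loopless e).symm }

end MultiGraph

/-- A 2-isomorphism: a bijection of edge sets preserving edge sets of cycles. -/
def TwoIsomorphic (G G' : MultiGraph) : Prop :=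
  ∃ σ : Fin G.nE ≃ Fin G'.nE, ∀ C, G.IsCycleEdgeSet C ↔ G'.IsCycleEdgeSet (σ '' C)

/-- For complementary primitive sublattices of an integral positive
definite unimodular lattice, the restriction maps carry `Short(Λ)` into `Short(Λᵢ)`,
and surjectivity onto `Short(Λ₁)` is equivalent to surjectivity onto `Short(Λ₂)`. -/
theorem stmt_8 (L : IntLattice) (S₁ S₂ : Set (Fin L.n → ℚ))
    (h₁ : IsLat S₁) (h₂ : IsLat S₂)
    (hsub₁ : S₁ ⊆ intVecs (Fin L.n)) (hsub₂ : S₂ ⊆ intVecs (Fin L.n))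
    (hpos : PosDefOn L.B (intVecs (Fin L.n)))
    (huni : UnimodularOn L.B (intVecs (Fin L.n)))
    (hcomp : ComplementaryIn L.B (intVecs (Fin L.n)) S₁ S₂)
    (hprim₁ : PrimitiveIn L.B (intVecs (Fin L.n)) S₁)
    (hprim₂ : PrimitiveIn L.B (intVecs (Fin L.n)) S₂) :
    (∀ χ ∈ ShortOf L.B (intVecs (Fin L.n)), ∀ ξ ∈ dualOf L.B S₁,
      (∀ u ∈ S₁, qform L.B ξ u = qform L.B χ u) → ξ ∈ ShortOf L.B S₁) ∧
    (∀ χ ∈ ShortOf L.B (intVecs (Fin L.n)), ∀ ξ ∈ dualOf L.B S₂,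
      (∀ u ∈ S₂, qform L.B ξ u = qform L.B χ u) → ξ ∈ ShortOf L.B S₂) ∧
    ((∀ ξ ∈ ShortOf L.B S₁, ∃ χ ∈ ShortOf L.B (intVecs (Fin L.n)),
        ∀ u ∈ S₁, qform L.B χ u = qform L.B ξ u) ↔
      (∀ ξ ∈ ShortOf L.B S₂, ∃ χ ∈ ShortOf L.B (intVecs (Fin L.n)),
        ∀ u ∈ S₂, qform L.B χ u = qform L.B ξ u)) := by
  have hBsymm := L.symm
  have hcomp' : OrthogonalSets L.B S₁ S₂ ∧
      rkOf S₁ + rkOf S₂ = rkOf (intVecs (Fin L.n)) := hcomp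
  obtain ⟨horth, hrk⟩ := hcomp'
  refine ⟨?_, ?_, ?_⟩
  · intro χ hχ ξ hξ hagree
    exact restrict_short hBsymm huni hsub₁ hχ hξ hagree
  · intro χ hχ ξ hξ hagree
    exact restrict_short hBsymm huni hsub₂ hχ hξ hagree
  · constructor
    · intro hs1
      exact surj_transfer hBsymm hpos huni h₁ h₂ hsub₁ hsub₂ horth hrk hprim₂ hs1
    · intro hs2
      have horth' : OrthogonalSets L.B S₂ S₁ := fun x hx y hy => by
        rw [qform_comm hBsymm]; exact horth y hy x hx
      have hrk' : rkOf S₂ + rkOf S₁ = rkOf (intVecs (Fin L.n)) := by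
        rw [add_comm]; exact hrk
      exact surj_transfer hBsymm hpos huni h₂ h₁ hsub₂ hsub₁ horth' hrk' hprim₁ hs2

end Greene
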